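/- arXiv:0908.3954 — 2 statements merged into one kernel-verified Lean document; each statement's English description precedes it below -/
import Mathlib

section
/- For interval matrices [A] ∈ 𝕀ℝ^{n×m} and [B] ∈ 𝕀ℝ^{m×p}, the interval matrix product defined entrywise by ([A][B])_{ij} = ∑_k [a_{ik}][b_{kj}] (using interval arithmetic) equals the interval hull of the set {AB : A ∈ [A], B ∈ [B]}. -/
open Pointwise

/-- The interval matrix `[A] = {A : A̲ ≤ A ≤ Ā}` (componentwise inequalities). -/
def Imat {n m : ℕ} (lo hi : Matrix (Fin n) (Fin m) ℝ) : Set (Matrix (Fin n) (Fin m) ℝ) :=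
  {A | ∀ i j, A i j ∈ Set.Icc (lo i j) (hi i j)}

lemma sum_Icc_sets {ι : Type*} (s : Finset ι) (f g : ι → ℝ) (h : ∀ k ∈ s, f k ≤ g k) :
    ∑ k ∈ s, Set.Icc (f k) (g k) = Set.Icc (∑ k ∈ s, f k) (∑ k ∈ s, g k) := by
  induction s using Finset.cons_induction with
  | empty => simp; rfl
  | cons a s ha ih =>
      rw [Finset.sum_cons, Finset.sum_cons, Finset.sum_cons,
        ih (fun k hk => h k (Finset.mem_cons_of_mem hk)),
        Set.Icc_add_Icc (h a (Finset.mem_cons_self a s))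
          (Finset.sum_le_sum fun k hk => h k (Finset.mem_cons_of_mem hk))]

lemma image2_mul_Icc_eq (a b c d : ℝ) (hab : a ≤ b) (hcd : c ≤ d) :
    Set.image2 (· * ·) (Set.Icc a b) (Set.Icc c d) =
      Set.Icc (sInf (Set.image2 (· * ·) (Set.Icc a b) (Set.Icc c d)))
        (sSup (Set.image2 (· * ·) (Set.Icc a b) (Set.Icc c d))) := by
  apply eq_Icc_of_connected_compact
  · rw [← Set.image_prod]
    exact ((isConnected_Icc hab).prod (isConnected_Icc hcd)).image _
      (continuous_fst.mul continuous_snd).continuousOn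
  · rw [← Set.image_prod]
    exact (isCompact_Icc.prod isCompact_Icc).image (continuous_fst.mul continuous_snd)

/-- The interval matrix product, computed entrywise by interval arithmetic as
`([A][B])_{ij} = ∑ₖ [a_{ik}]·[b_{kj}]` (setwise interval products and Minkowski sums),
equals the interval hull of `{AB : A ∈ [A], B ∈ [B]}`: entrywise, it is the smallest
closed interval containing `{(AB)_{ij} : A ∈ [A], B ∈ [B]}`. -/
theorem interval_matrix_product_eq_hull (n m p : ℕ)
    (Alo Ahi : Matrix (Fin n) (Fin m) ℝ) (Blo Bhi : Matrix (Fin m) (Fin p) ℝ)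
    (hA : ∀ i j, Alo i j ≤ Ahi i j) (hB : ∀ i j, Blo i j ≤ Bhi i j)
    (i : Fin n) (j : Fin p) :
    ∑ k : Fin m, Set.image2 (· * ·) (Set.Icc (Alo i k) (Ahi i k))
        (Set.Icc (Blo k j) (Bhi k j)) =
      Set.Icc
        (sInf {x : ℝ | ∃ A ∈ Imat Alo Ahi, ∃ B ∈ Imat Blo Bhi, x = (A * B) i j})
        (sSup {x : ℝ | ∃ A ∈ Imat Alo Ahi, ∃ B ∈ Imat Blo Bhi, x = (A * B) i j}) := by
  set P : Fin m → Set ℝ := fun k =>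
    Set.image2 (· * ·) (Set.Icc (Alo i k) (Ahi i k)) (Set.Icc (Blo k j) (Bhi k j)) with hP
  set l : Fin m → ℝ := fun k => sInf (P k)
  set u : Fin m → ℝ := fun k => sSup (P k)
  have hPIcc : ∀ k, P k = Set.Icc (l k) (u k) := fun k =>
    image2_mul_Icc_eq _ _ _ _ (hA i k) (hB k j)
  have hlu : ∀ k, l k ≤ u k := by
    intro k
    have : (Alo i k * Blo k j) ∈ P k :=
      Set.mem_image2_of_mem (Set.left_mem_Icc.2 (hA i k)) (Set.left_mem_Icc.2 (hB k j))
    rw [hPIcc k] at this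
    exact le_trans this.1 this.2
  have hsum : ∑ k : Fin m, P k = Set.Icc (∑ k, l k) (∑ k, u k) := by
    rw [show (∑ k : Fin m, P k) = ∑ k : Fin m, Set.Icc (l k) (u k) by
      exact Finset.sum_congr rfl fun k _ => hPIcc k]
    exact sum_Icc_sets _ _ _ fun k _ => hlu k
  have hLU : ∑ k, l k ≤ ∑ k, u k := Finset.sum_le_sum fun k _ => hlu k
  have hSet : {x : ℝ | ∃ A ∈ Imat Alo Ahi, ∃ B ∈ Imat Blo Bhi, x = (A * B) i j} =
      Set.Icc (∑ k, l k) (∑ k, u k) := by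
    ext x
    constructor
    · rintro ⟨A, hAmem, B, hBmem, rfl⟩
      rw [Matrix.mul_apply]
      constructor
      · refine Finset.sum_le_sum fun k _ => ?_
        have : A i k * B k j ∈ P k :=
          Set.mem_image2_of_mem (hAmem i k) (hBmem k j)
        rw [hPIcc k] at this; exact this.1
      · refine Finset.sum_le_sum fun k _ => ?_
        have : A i k * B k j ∈ P k :=
          Set.mem_image2_of_mem (hAmem i k) (hBmem k j)
        rw [hPIcc k] at this; exact this.2
    · intro hx
      rw [← hsum] at hx
      obtain ⟨g, hg, hgsum⟩ := (Set.mem_finset_sum _ _ _).1 hx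
      have hab : ∀ k : Fin m, ∃ a b, a ∈ Set.Icc (Alo i k) (Ahi i k) ∧
          b ∈ Set.Icc (Blo k j) (Bhi k j) ∧ a * b = g k := by
        intro k
        obtain ⟨a, ha, b, hb, hab⟩ := hg (Finset.mem_univ k)
        exact ⟨a, b, ha, hb, hab⟩
      choose a b ha hb hprod using hab
      refine ⟨fun i' k => if i' = i then a k else Alo i' k, ?_,
        fun k j' => if j' = j then b k else Blo k j', ?_, ?_⟩
      · intro i' k
        by_cases h : i' = i
        · simpa [h] using ha k
        · simp [h, Set.left_mem_Icc.2 (hA i' k)]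
      · intro k j'
        by_cases h : j' = j
        · simpa [h] using hb k
        · simp [h, Set.left_mem_Icc.2 (hB k j')]
      · erw [Matrix.mul_apply]
        rw [← hgsum]
        exact (Finset.sum_congr rfl fun k _ => by simp [hprod k]).symm
  rw [hSet, csInf_Icc hLU, csSup_Icc hLU, hsum]
end

section
/- Taylor enclosure theorem: let [A] be an interval matrix in ℝ^{n×n} and K ∈ ℕ with K+2 > ‖[A]‖. Then for every A ∈ [A], exp(A) belongs to the interval matrix [T]([A],K) := I + [A] + (1/2)[A]² + ... + (1/K!)[A]^K + ρ(‖[A]‖,K)·[−E,E], where powers [A]^k are computed by iterated interval matrix multiplication. -/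
open Pointwise

attribute [local instance] Matrix.linftyOpNormedRing Matrix.linftyOpNormedAlgebra

/-- The matrix exponential, defined by its power series. -/
noncomputable def expM {n : ℕ} (A : Matrix (Fin n) (Fin n) ℝ) : Matrix (Fin n) (Fin n) ℝ :=
  ∑' k : ℕ, (k.factorial : ℝ)⁻¹ • A ^ k

/-- The truncation error bound `ρ(α,K) = α^(K+1) / ((K+1)!·(1 − α/(K+2)))`. -/
noncomputable def rho (α : ℝ) (K : ℕ) : ℝ :=
  α ^ (K + 1) / ((K + 1).factorial * (1 - α / (K + 2)))

/-- An interval matrix, given entrywise by subsets (intervals) of `ℝ`. -/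
abbrev IMat (n : ℕ) := Matrix (Fin n) (Fin n) (Set ℝ)

/-- The interval matrix `[A̲, Ā]` with entries `[a̲_{ij}, ā_{ij}]`. -/
def ofBounds {n : ℕ} (lo hi : Matrix (Fin n) (Fin n) ℝ) : IMat n :=
  fun i j => Set.Icc (lo i j) (hi i j)

/-- Membership of a real matrix in an interval matrix (entrywise membership). -/
def memI {n : ℕ} (M : Matrix (Fin n) (Fin n) ℝ) (A : IMat n) : Prop :=
  ∀ i j, M i j ∈ A i j

/-- Entrywise interval matrix addition (setwise interval addition). -/
def iadd {n : ℕ} (A B : IMat n) : IMat n := fun i j => A i j + B i j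

/-- Scalar multiple of an interval matrix (setwise). -/
def ismul {n : ℕ} (c : ℝ) (A : IMat n) : IMat n := fun i j => c • A i j

/-- Interval matrix product: `([A][B])_{ij} = ∑ₖ [a_{ik}]·[b_{kj}]`, where interval
products are setwise and sums are Minkowski sums (interval arithmetic). -/
def imul {n : ℕ} (A B : IMat n) : IMat n :=
  fun i j => ∑ k : Fin n, Set.image2 (· * ·) (A i k) (B k j)

/-- The degenerate (point) interval identity matrix. -/
def iId (n : ℕ) : IMat n := fun i j => {(1 : Matrix (Fin n) (Fin n) ℝ) i j}

/-- Interval matrix powers, computed by iterated interval matrix multiplication. -/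
def ipow {n : ℕ} (A : IMat n) : ℕ → IMat n
  | 0 => iId n
  | k + 1 => imul (ipow A k) A

/-- The norm of an interval matrix: `‖[A]‖ = sup{‖A‖_∞ : A ∈ [A]}`. -/
noncomputable def intervalNorm {n : ℕ} (lo hi : Matrix (Fin n) (Fin n) ℝ) : ℝ :=
   sSup ((fun M => ‖M‖) '' {A : Matrix (Fin n) (Fin n) ℝ | ∀ i j, A i j ∈ Set.Icc (lo i j) (hi i j)})

/-- The `linfty` operator norm is bounded by the sum of entry norms. -/
lemma norm_le_sum_entries {n : ℕ} (A : Matrix (Fin n) (Fin n) ℝ) :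
    ‖A‖ ≤ ∑ i, ∑ j, ‖A i j‖ := by
  rw [Matrix.linfty_opNorm_def]
  have h : ((Finset.univ : Finset (Fin n)).sup fun i => ∑ j, ‖A i j‖₊) ≤
      ∑ i, ∑ j, ‖A i j‖₊ :=
    Finset.sup_le fun i _ => Finset.single_le_sum (f := fun i => ∑ j, ‖A i j‖₊)
      (fun _ _ => zero_le') (Finset.mem_univ i)
  calc (((Finset.univ : Finset (Fin n)).sup fun i => ∑ j, ‖A i j‖₊ : NNReal) : ℝ)
      ≤ ((∑ i, ∑ j, ‖A i j‖₊ : NNReal) : ℝ) := by exact_mod_cast h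
    _ = ∑ i, ∑ j, ‖A i j‖ := by push_cast; rfl

/-- Each entry is bounded by the `linfty` operator norm. -/
lemma entry_le_norm {n : ℕ} (A : Matrix (Fin n) (Fin n) ℝ) (i j : Fin n) :
    ‖A i j‖ ≤ ‖A‖ := by
  rw [Matrix.linfty_opNorm_def]
  have h : ‖A i j‖₊ ≤ (Finset.univ : Finset (Fin n)).sup fun i => ∑ j, ‖A i j‖₊ :=
    le_trans (Finset.single_le_sum (f := fun j => ‖A i j‖₊) (fun _ _ => zero_le')
      (Finset.mem_univ j)) (Finset.le_sup (f := fun i => ∑ j, ‖A i j‖₊) (Finset.mem_univ i))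
  exact_mod_cast h

/-- Powers of a member matrix belong to the interval powers. -/
lemma mem_ipow {n : ℕ} {B : IMat n} {A : Matrix (Fin n) (Fin n) ℝ} (hA : memI A B) :
    ∀ k, memI (A ^ k) (ipow B k)
  | 0 => by
      intro i j
      simp only [pow_zero, ipow, iId, Set.mem_singleton_iff]
  | k + 1 => by
      intro i j
      show (A ^ k * A) i j ∈ ∑ l : Fin n, Set.image2 (· * ·) (ipow B k i l) (B l j)
      rw [Matrix.mul_apply]
      exact Set.finset_sum_mem_finset_sum _ _ _
        (fun l _ => Set.mul_mem_mul (mem_ipow hA k i l) (hA l j))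

/-- Taylor enclosure theorem: if `K + 2 > ‖[A]‖` then for every `A ∈ [A]`, `exp A`
belongs to the interval matrix
`[T]([A],K) = I + [A] + (1/2)[A]² + ⋯ + (1/K!)[A]^K + ρ(‖[A]‖,K)·[−E,E]`,
computed with interval matrix arithmetic. -/
theorem taylor_interval_enclosure (n K : ℕ) (Alo Ahi : Matrix (Fin n) (Fin n) ℝ)
    (hA : ∀ i j, Alo i j ≤ Ahi i j)
    (hK : intervalNorm Alo Ahi < (K : ℝ) + 2) :
    ∀ A : Matrix (Fin n) (Fin n) ℝ, (∀ i j, A i j ∈ Set.Icc (Alo i j) (Ahi i j)) →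
      memI (expM A)
        (iadd (fun i j => ∑ k ∈ Finset.range (K + 1),
            (k.factorial : ℝ)⁻¹ • (ipow (ofBounds Alo Ahi) k) i j)
          (fun _ _ => rho (intervalNorm Alo Ahi) K • Set.Icc (-1 : ℝ) 1)) := by
  intro A hAmem
  set α := intervalNorm Alo Ahi with hαdef
  -- the set of norms is bounded above
  have hbdd : BddAbove ((fun M => ‖M‖) ''
      {M : Matrix (Fin n) (Fin n) ℝ | ∀ i j, M i j ∈ Set.Icc (Alo i j) (Ahi i j)}) := by
    refine ⟨∑ i, ∑ j, max ‖Alo i j‖ ‖Ahi i j‖, ?_⟩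
    rintro x ⟨M, hM, rfl⟩
    refine le_trans (norm_le_sum_entries M) ?_
    refine Finset.sum_le_sum fun i _ => Finset.sum_le_sum fun j _ => ?_
    have h := hM i j
    rw [Set.mem_Icc] at h
    simpa [Real.norm_eq_abs] using abs_le_max_abs_abs h.1 h.2
  have hnormA : ‖A‖ ≤ α := le_csSup hbdd ⟨A, hAmem, rfl⟩
  have hα0 : (0 : ℝ) ≤ α := le_trans (norm_nonneg A) hnormA
  -- summability of the exponential series
  have hsum : Summable (fun k : ℕ => ((k.factorial : ℝ))⁻¹ • A ^ k) := by
    have := NormedSpace.expSeries_summable' (𝕂 := ℝ) A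
    exact this
  -- split the series
  have hsplit : ∑ k ∈ Finset.range (K + 1), ((k.factorial : ℝ))⁻¹ • A ^ k +
      ∑' m : ℕ, (((m + (K + 1)).factorial : ℝ))⁻¹ • A ^ (m + (K + 1)) =
      expM A := hsum.sum_add_tsum_nat_add (K + 1)
  set R := ∑' m : ℕ, (((m + (K + 1)).factorial : ℝ))⁻¹ • A ^ (m + (K + 1)) with hRdef
  -- geometric bound data
  set r : ℝ := α / (K + 2) with hrdef
  have hKpos : (0 : ℝ) < (K : ℝ) + 2 := by positivity
  have hr0 : 0 ≤ r := div_nonneg hα0 hKpos.le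
  have hr1 : r < 1 := (div_lt_one hKpos).2 hK
  have hc0 : (0 : ℝ) ≤ α ^ (K + 1) / (K + 1).factorial := by positivity
  -- termwise bound for the tail
  have hterm : ∀ m : ℕ, ‖(((m + (K + 1)).factorial : ℝ))⁻¹ • A ^ (m + (K + 1))‖ ≤
      (α ^ (K + 1) / (K + 1).factorial) * r ^ m := by
    intro m
    have hnormpow : ‖A ^ (m + (K + 1))‖ ≤ α ^ (m + (K + 1)) :=
      le_trans (norm_pow_le' A (by omega))
        (pow_le_pow_left₀ (norm_nonneg A) hnormA _)
    have hfact : ((K + 1).factorial : ℝ) * ((K : ℝ) + 2) ^ m ≤ ((m + (K + 1)).factorial : ℝ) := by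
      have := Nat.factorial_mul_pow_le_factorial (m := K + 1) (n := m)
      have h2 : ((K + 1).factorial * (K + 1 + 1) ^ m : ℕ) ≤ ((K + 1 + m).factorial : ℕ) := this
      have h3 : (((K + 1).factorial * (K + 1 + 1) ^ m : ℕ) : ℝ) ≤ (((K + 1 + m).factorial : ℕ) : ℝ) := by
        exact_mod_cast h2
      rw [Nat.add_comm (K + 1) m] at h3
      push_cast at h3
      convert h3 using 2 <;> push_cast <;> ring
    have hfpos : (0 : ℝ) < ((m + (K + 1)).factorial : ℝ) := by positivity
    have hgpos : (0 : ℝ) < ((K + 1).factorial : ℝ) * ((K : ℝ) + 2) ^ m := by positivity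
    calc ‖(((m + (K + 1)).factorial : ℝ))⁻¹ • A ^ (m + (K + 1))‖
        = (((m + (K + 1)).factorial : ℝ))⁻¹ * ‖A ^ (m + (K + 1))‖ := by
          rw [norm_smul]; simp [abs_of_nonneg (le_of_lt hfpos)]
      _ ≤ (((m + (K + 1)).factorial : ℝ))⁻¹ * α ^ (m + (K + 1)) := by
          exact mul_le_mul_of_nonneg_left hnormpow (by positivity)
      _ ≤ (((K + 1).factorial : ℝ) * ((K : ℝ) + 2) ^ m)⁻¹ * α ^ (m + (K + 1)) := by
          refine mul_le_mul_of_nonneg_right ?_ (by positivity)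
          exact inv_anti₀ hgpos hfact
      _ = (α ^ (K + 1) / (K + 1).factorial) * r ^ m := by
          rw [pow_add, hrdef, div_pow, mul_inv]
          ring
    done
  -- the geometric majorant is summable with sum `rho α K`
  have hgeom : Summable (fun m : ℕ => (α ^ (K + 1) / (K + 1).factorial) * r ^ m) :=
    (summable_geometric_of_lt_one hr0 hr1).mul_left _
  have hgeomsum : ∑' m : ℕ, (α ^ (K + 1) / (K + 1).factorial) * r ^ m = rho α K := by
    rw [tsum_mul_left, tsum_geometric_of_lt_one hr0 hr1, rho]
    have h1r : (0:ℝ) < 1 - α / (↑K + 2) := by rw [← hrdef]; linarith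
    have hf : ((K + 1).factorial : ℝ) ≠ 0 := by positivity
    rw [hrdef]
    field_simp
  -- summability of the norms of the tail
  have hnorms : Summable (fun m : ℕ => ‖(((m + (K + 1)).factorial : ℝ))⁻¹ • A ^ (m + (K + 1))‖) :=
    Summable.of_nonneg_of_le (fun m => norm_nonneg _) hterm hgeom
  have hRle : ‖R‖ ≤ rho α K := by
    calc ‖R‖ ≤ ∑' m : ℕ, ‖(((m + (K + 1)).factorial : ℝ))⁻¹ • A ^ (m + (K + 1))‖ :=
          norm_tsum_le_tsum_norm hnorms
      _ ≤ ∑' m : ℕ, (α ^ (K + 1) / (K + 1).factorial) * r ^ m :=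
          hnorms.tsum_le_tsum hterm hgeom
      _ = rho α K := hgeomsum
  have hρ0 : 0 ≤ rho α K := le_trans (norm_nonneg R) hRle
  -- entrywise conclusion
  intro i j
  have hsplit' : expM A i j =
      (∑ k ∈ Finset.range (K + 1), ((k.factorial : ℝ))⁻¹ • A ^ k) i j + R i j := by
    rw [← hsplit]; simp [Matrix.add_apply]
  show expM A i j ∈ (∑ k ∈ Finset.range (K + 1),
      (k.factorial : ℝ)⁻¹ • (ipow (ofBounds Alo Ahi) k) i j) + rho α K • Set.Icc (-1 : ℝ) 1
  rw [hsplit']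
  refine Set.add_mem_add ?_ ?_
  · -- the Taylor polynomial part
    have : (∑ k ∈ Finset.range (K + 1), ((k.factorial : ℝ))⁻¹ • A ^ k) i j =
        ∑ k ∈ Finset.range (K + 1), ((k.factorial : ℝ))⁻¹ • (A ^ k) i j := by
      rw [Matrix.sum_apply]
      simp [Matrix.smul_apply]
    rw [this]
    refine Set.finset_sum_mem_finset_sum _ _ _ fun k _ => ?_
    exact Set.smul_mem_smul_set (mem_ipow (fun i j => hAmem i j) k i j)
  · -- the remainder part
    have hRij : |R i j| ≤ rho α K :=
      le_trans (by simpa [Real.norm_eq_abs] using entry_le_norm R i j) hRle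
    rcases eq_or_lt_of_le hρ0 with h0 | hpos
    · have : R i j = 0 := by
        rw [← h0] at hRij
        exact abs_eq_zero.mp (le_antisymm hRij (abs_nonneg _))
      exact ⟨0, by norm_num, by simp [this]⟩
    · refine Set.mem_smul_set.mpr ⟨R i j / rho α K, ?_, ?_⟩
      · rw [Set.mem_Icc]
        rw [abs_le] at hRij
        constructor
        · rw [neg_le, ← neg_div]
          exact (div_le_one hpos).2 (by linarith [hRij.1])
        · exact (div_le_one hpos).2 hRij.2
      · simp only [smul_eq_mul]
        field_simp
end
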